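/- For a piecewise linear path with three pieces v₁, v₂, v₃ ∈ ℝ^d satisfying v₁ + 3v₂ + v₃ = 0, the level-three log-signature expression (1/12)∑_{i ≠ j}(v_i⊗v_i⊗v_j + v_i⊗v_j⊗v_j) + (1/3)∑_{(i,j,k): i<j<k or i>j>k} v_i⊗v_j⊗v_k − (1/6)∑_{(i,j,k): i<j>k or i>j<k} v_i⊗v_j⊗v_k vanishes in (ℝ^d)^{⊗3}. -/
import Mathlib


/-- If the three pieces `v₁, v₂, v₃ ∈ ℝ^d` of a piecewise linear path
satisfy `v₁ + 3v₂ + v₃ = 0`, then the level-three log-signature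
`(1/12)∑_{i≠j}(v_i⊗v_i⊗v_j + v_i⊗v_j⊗v_j) + (1/3)∑_{S₁} v_i⊗v_j⊗v_k − (1/6)∑_{S₂} v_i⊗v_j⊗v_k`
vanishes in `(ℝ^d)^{⊗3}`, where `S₁ = {i<j<k or i>j>k}` and `S₂ = {i<j>k or i>j<k}`. -/
theorem level_three_logSig_vanishes_of_linear_relation (d : ℕ) (v : Fin 3 → Fin d → ℝ)
    (hrel : v 0 + (3 : ℝ) • v 1 + v 2 = 0) :
    ∀ p q r : Fin d,
      (1/12 : ℝ) * (∑ i : Fin 3, ∑ j : Fin 3,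
          if i ≠ j then v i p * v i q * v j r + v i p * v j q * v j r else 0)
        + (1/3 : ℝ) * (∑ i : Fin 3, ∑ j : Fin 3, ∑ k : Fin 3,
          if (i < j ∧ j < k) ∨ (k < j ∧ j < i) then v i p * v j q * v k r else 0)
        - (1/6 : ℝ) * (∑ i : Fin 3, ∑ j : Fin 3, ∑ k : Fin 3,
          if (i < j ∧ k < j) ∨ (j < i ∧ j < k) then v i p * v j q * v k r else 0)
      = 0 := by
  intro p q r
  have h : ∀ x, v 1 x = -(v 0 x + v 2 x) / 3 := by
    intro x
    have := congrFun hrel x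
    simp [Pi.add_apply, Pi.smul_apply] at this
    linarith
  simp only [Fin.sum_univ_three]
  norm_num [Fin.lt_def, Fin.ext_iff, h]
  ring
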